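/- For every integer n ≥ 2 and every t ∈ (0,1), the inequality (n-1)·∫_0^t r^{n-2}/(1-r^2)^{n-1} dr ≥ t^{n-1} / ((1-t^2)^{n-2}(1+t^2)) holds. -/

import Mathlib

open Real Set

lemma keyDeriv (m : ℕ) (x : ℝ) (hx : x ^ 2 < 1) :
    HasDerivAt (fun y : ℝ => y ^ (m + 1) / ((1 - y ^ 2) ^ m * (1 + y ^ 2)))
      (((m : ℝ) + 1) * x ^ m / (1 - x ^ 2) ^ (m + 1)
        - 4 * x ^ (m + 2) / ((1 - x ^ 2) ^ (m + 1) * (1 + x ^ 2) ^ 2)) x := by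
  have h1 : (0:ℝ) < 1 - x ^ 2 := by linarith
  have h2 : (0:ℝ) < 1 + x ^ 2 := by positivity
  have hu : HasDerivAt (fun y : ℝ => y ^ (m + 1)) ((m + 1 : ℕ) * x ^ m) x := by
    simpa using hasDerivAt_pow (m + 1) x
  have hs : HasDerivAt (fun y : ℝ => 1 - y ^ 2) (-(2 * x ^ 1)) x := by
    simpa using (hasDerivAt_pow 2 x).const_sub 1
  have hp : HasDerivAt (fun y : ℝ => (1 - y ^ 2) ^ m)
      ((m : ℝ) * (1 - x ^ 2) ^ (m - 1) * (-(2 * x ^ 1))) x := hs.pow m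
  have hq : HasDerivAt (fun y : ℝ => 1 + y ^ 2) (2 * x ^ 1) x := by
    simpa using (hasDerivAt_pow 2 x).const_add 1
  have hv := hp.mul hq
  have hv0 : (1 - x ^ 2) ^ m * (1 + x ^ 2) ≠ 0 := by positivity
  have hd := hu.div hv hv0
  refine hd.congr_deriv ?_
  simp only [Pi.mul_apply]
  have e1 : (1 - x ^ 2) ≠ 0 := ne_of_gt h1
  have e2 : (1 + x ^ 2) ≠ 0 := ne_of_gt h2
  cases m with
  | zero => field_simp; ring
  | succ k =>
    have hk : k + 1 - 1 = k := rfl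
    rw [hk]
    field_simp
    push_cast
    ring

theorem stmt1 (n : ℕ) (hn : 2 ≤ n) (t : ℝ) (ht : t ∈ Set.Ioo (0:ℝ) 1) :
    ((n : ℝ) - 1) * ∫ r in (0:ℝ)..t, r ^ (n - 2) / (1 - r ^ 2) ^ (n - 1) ≥
      t ^ (n - 1) / ((1 - t ^ 2) ^ (n - 2) * (1 + t ^ 2)) := by
  obtain ⟨m, rfl⟩ : ∃ m, n = m + 2 := ⟨n - 2, by omega⟩
  obtain ⟨ht0, ht1⟩ := ht
  have hmn1 : m + 2 - 1 = m + 1 := rfl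
  have hmn2 : m + 2 - 2 = m := rfl
  rw [hmn1, hmn2]
  have hcast : ((m + 2 : ℕ) : ℝ) - 1 = (m : ℝ) + 1 := by push_cast; ring
  rw [hcast]
  -- facts about points in [0, t]
  have hsq : ∀ x ∈ Icc (0:ℝ) t, x ^ 2 < 1 := by
    intro x hx
    have h1 : x ^ 2 ≤ t ^ 2 := by nlinarith [hx.1, hx.2]
    nlinarith
  set F : ℝ → ℝ := fun y => y ^ (m + 1) / ((1 - y ^ 2) ^ m * (1 + y ^ 2)) with hF
  set g : ℝ → ℝ := fun x => ((m : ℝ) + 1) * x ^ m / (1 - x ^ 2) ^ (m + 1)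
      - 4 * x ^ (m + 2) / ((1 - x ^ 2) ^ (m + 1) * (1 + x ^ 2) ^ 2) with hg
  set f : ℝ → ℝ := fun r => r ^ m / (1 - r ^ 2) ^ (m + 1) with hf
  have hden : ∀ x ∈ Icc (0:ℝ) t, (0:ℝ) < 1 - x ^ 2 := by
    intro x hx; have := hsq x hx; linarith
  have hcf : ContinuousOn f (Icc 0 t) := by
    apply ContinuousOn.div (by fun_prop) (by fun_prop)
    intro x hx; exact pow_ne_zero _ (ne_of_gt (hden x hx))
  have hcg : ContinuousOn g (Icc 0 t) := by
    apply ContinuousOn.sub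
    · apply ContinuousOn.div (by fun_prop) (by fun_prop)
      intro x hx; exact pow_ne_zero _ (ne_of_gt (hden x hx))
    · apply ContinuousOn.div (by fun_prop) (by fun_prop)
      intro x hx
      have h2 : (0:ℝ) < 1 + x ^ 2 := by positivity
      have := hden x hx
      positivity
  have hif : IntervalIntegrable f MeasureTheory.volume 0 t :=
    (hcf.mono (by rw [uIcc_of_le ht0.le])).intervalIntegrable
  have hig : IntervalIntegrable g MeasureTheory.volume 0 t :=
    (hcg.mono (by rw [uIcc_of_le ht0.le])).intervalIntegrable
  have hftc : ∫ r in (0:ℝ)..t, g r = F t - F 0 := by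
    apply intervalIntegral.integral_eq_sub_of_hasDerivAt
    · intro x hx
      rw [uIcc_of_le ht0.le] at hx
      exact keyDeriv m x (hsq x hx)
    · exact hig
  have hF0 : F 0 = 0 := by simp [hF]
  have hmono : ∫ r in (0:ℝ)..t, g r ≤ ∫ r in (0:ℝ)..t, ((m : ℝ) + 1) * f r := by
    apply intervalIntegral.integral_mono_on ht0.le hig (hif.const_mul _)
    intro x hx
    have h1 := hden x hx
    have h2 : (0:ℝ) < 1 + x ^ 2 := by positivity
    have h3 : 0 ≤ 4 * x ^ (m + 2) / ((1 - x ^ 2) ^ (m + 1) * (1 + x ^ 2) ^ 2) := by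
      have hx0 := hx.1
      positivity
    simp only [hg, hf]
    rw [mul_div_assoc]
    linarith
  rw [intervalIntegral.integral_const_mul] at hmono
  have htsq : (0:ℝ) < 1 - t ^ 2 := hden t ⟨ht0.le, le_refl t⟩
  calc t ^ (m + 1) / ((1 - t ^ 2) ^ m * (1 + t ^ 2)) = F t - F 0 := by rw [hF0]; ring
    _ = ∫ r in (0:ℝ)..t, g r := hftc.symm
    _ ≤ ((m : ℝ) + 1) * ∫ r in (0:ℝ)..t, f r := hmono
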